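/- arXiv:1005.5127 — 2 statements merged into one kernel-verified Lean document; each statement's English description precedes it below -/
import Mathlib

section
/- Let ρ be a finite Borel measure on ℝ^n × ℝ^k that is α-super log-concave (with respect to the Euclidean norm |(y,z)|² = |y|² + |z|² on the product). Then the pushforward of ρ under the coordinate projection (y, z) ↦ y is an α-super log-concave measure on ℝ^n. -/
open MeasureTheory Pointwise ENNReal

noncomputable section

/-- A nonnegative function is log-concave if `f x ^ s * f y ^ t ≤ f (s • x + t • y)`
for all `x, y` and all `s, t ≥ 0` with `s + t = 1`. -/
def IsLogConcave {E : Type*} [AddCommGroup E] [Module ℝ E] (f : E → ℝ) : Prop :=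
  ∀ x y : E, ∀ s t : ℝ, 0 ≤ s → 0 ≤ t → s + t = 1 →
    f x ^ s * f y ^ t ≤ f (s • x + t • y)

/-- The Prékopa–Leindler property of a measure, tested on nonnegative continuous
compactly supported functions. -/
def PrekopaLeindler {E : Type*} [AddCommGroup E] [Module ℝ E] [TopologicalSpace E]
    [MeasurableSpace E] (ρ : Measure E) : Prop :=
  ∀ s t : ℝ, 0 ≤ s → 0 ≤ t → s + t = 1 →
    ∀ a b c : E → ℝ, Continuous a → Continuous b → Continuous c →
      HasCompactSupport a → HasCompactSupport b → HasCompactSupport c →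
      (∀ x, 0 ≤ a x) → (∀ x, 0 ≤ b x) → (∀ x, 0 ≤ c x) →
      (∀ x y, b x ^ s * c y ^ t ≤ a (s • x + t • y)) →
      (∫ x, b x ∂ρ) ^ s * (∫ x, c x ∂ρ) ^ t ≤ ∫ x, a x ∂ρ

/-- A measure `ρ` on `ℝ^n` is `α`-super log-concave if the measure with density
`x ↦ exp (α/2 * |x|^2)` with respect to `ρ` satisfies the Prékopa–Leindler property. -/
def SuperLogConcave {n : ℕ} (α : ℝ) (ρ : Measure (EuclideanSpace ℝ (Fin n))) : Prop :=
  PrekopaLeindler (ρ.withDensity fun x => ENNReal.ofReal (Real.exp (α / 2 * ‖x‖ ^ 2)))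

/-- Log-concavity of the truncation cutoff `z ↦ max 0 (min 1 (c - ‖z‖))`. -/
lemma cutoff_logConcave {F : Type*} [NormedAddCommGroup F] [NormedSpace ℝ F] (c : ℝ) {s t : ℝ}
    (hs : 0 ≤ s) (ht : 0 ≤ t) (hst : s + t = 1) (z z' : F) :
    (max 0 (min 1 (c - ‖z‖))) ^ s * (max 0 (min 1 (c - ‖z'‖))) ^ t
      ≤ max 0 (min 1 (c - ‖s • z + t • z'‖)) := by
  rcases hs.eq_or_lt with h | hs'
  · have ht1 : t = 1 := by linarith
    subst h; subst ht1
    simp [Real.rpow_zero, Real.rpow_one]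
  rcases ht.eq_or_lt with h | ht'
  · have hs1 : s = 1 := by linarith
    subst h; subst hs1
    simp [Real.rpow_zero, Real.rpow_one]
  set u := max 0 (min 1 (c - ‖z‖)) with hu
  set v := max 0 (min 1 (c - ‖z'‖)) with hv
  have hu0 : 0 ≤ u := le_max_left _ _
  have hv0 : 0 ≤ v := le_max_left _ _
  rcases hu0.eq_or_lt with h | hu'
  · rw [← h, Real.zero_rpow hs'.ne', zero_mul]
    exact le_max_left _ _
  rcases hv0.eq_or_lt with h | hv'
  · rw [← h, Real.zero_rpow ht'.ne', mul_zero]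
    exact le_max_left _ _
  have h1 : u ^ s * v ^ t ≤ s * u + t * v :=
    Real.geom_mean_le_arith_mean2_weighted hs ht hu0 hv0 hst
  have humin : u = min 1 (c - ‖z‖) := max_eq_right (le_of_lt (by simpa [hu, lt_max_iff] using hu'))
  have hvmin : v = min 1 (c - ‖z'‖) := max_eq_right (le_of_lt (by simpa [hv, lt_max_iff] using hv'))
  have hu1 : u ≤ 1 := humin.le.trans (min_le_left _ _)
  have hv1 : v ≤ 1 := hvmin.le.trans (min_le_left _ _)
  have huc : u ≤ c - ‖z‖ := humin.le.trans (min_le_right _ _)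
  have hvc : v ≤ c - ‖z'‖ := hvmin.le.trans (min_le_right _ _)
  have htri : ‖s • z + t • z'‖ ≤ s * ‖z‖ + t * ‖z'‖ := by
    calc ‖s • z + t • z'‖ ≤ ‖s • z‖ + ‖t • z'‖ := norm_add_le _ _
    _ = s * ‖z‖ + t * ‖z'‖ := by
        rw [norm_smul, norm_smul, Real.norm_of_nonneg hs, Real.norm_of_nonneg ht]
  refine h1.trans (le_trans (le_min ?_ ?_) (le_max_right _ _))
  · nlinarith
  · have h2 : s * u ≤ s * (c - ‖z‖) := mul_le_mul_of_nonneg_left huc hs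
    have h3 : t * v ≤ t * (c - ‖z'‖) := mul_le_mul_of_nonneg_left hvc ht
    have h4 : s * c + t * c = c := by rw [← add_mul, hst, one_mul]
    nlinarith

/-- Log-concavity of the truncated reversed Gaussian density. -/
lemma phi_logConcave {F : Type*} [NormedAddCommGroup F] [NormedSpace ℝ F] {α : ℝ} (hα : 0 ≤ α)
    (c : ℝ) {s t : ℝ} (hs : 0 ≤ s) (ht : 0 ≤ t) (hst : s + t = 1) (z z' : F) :
    (Real.exp (-(α / 2) * ‖z‖ ^ 2) * max 0 (min 1 (c - ‖z‖))) ^ s *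
      (Real.exp (-(α / 2) * ‖z'‖ ^ 2) * max 0 (min 1 (c - ‖z'‖))) ^ t
      ≤ Real.exp (-(α / 2) * ‖s • z + t • z'‖ ^ 2) * max 0 (min 1 (c - ‖s • z + t • z'‖)) := by
  have htri : ‖s • z + t • z'‖ ≤ s * ‖z‖ + t * ‖z'‖ := by
    calc ‖s • z + t • z'‖ ≤ ‖s • z‖ + ‖t • z'‖ := norm_add_le _ _
    _ = s * ‖z‖ + t * ‖z'‖ := by
        rw [norm_smul, norm_smul, Real.norm_of_nonneg hs, Real.norm_of_nonneg ht]
  have hsq : ‖s • z + t • z'‖ ^ 2 ≤ s * ‖z‖ ^ 2 + t * ‖z'‖ ^ 2 := by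
    nlinarith [norm_nonneg (s • z + t • z'), norm_nonneg z, norm_nonneg z',
      sq_nonneg (‖z‖ - ‖z'‖), mul_nonneg hs ht]
  have he : Real.exp (-(α / 2) * ‖z‖ ^ 2) ^ s * Real.exp (-(α / 2) * ‖z'‖ ^ 2) ^ t
      ≤ Real.exp (-(α / 2) * ‖s • z + t • z'‖ ^ 2) := by
    rw [← Real.exp_mul, ← Real.exp_mul, ← Real.exp_add]
    apply Real.exp_le_exp.2
    nlinarith
  rw [Real.mul_rpow (Real.exp_pos _).le (le_max_left _ _),
    Real.mul_rpow (Real.exp_pos _).le (le_max_left _ _), mul_mul_mul_comm]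
  exact mul_le_mul he (cutoff_logConcave c hs ht hst z z')
    (mul_nonneg (Real.rpow_nonneg (le_max_left _ _) _) (Real.rpow_nonneg (le_max_left _ _) _))
    (Real.exp_pos _).le

/-- Integration against a `withDensity` measure with nonnegative real density. -/
lemma integral_withDensity_ofReal {X : Type*} [MeasurableSpace X] (μ : Measure X) (e : X → ℝ)
    (he : Measurable e) (hpos : ∀ x, 0 ≤ e x) (g : X → ℝ) :
    ∫ x, g x ∂(μ.withDensity fun x => ENNReal.ofReal (e x)) = ∫ x, e x * g x ∂μ := by
  have h1 : (fun x => ENNReal.ofReal (e x))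
      = fun x => ((Real.toNNReal (e x) : NNReal) : ℝ≥0∞) := rfl
  rw [h1, integral_withDensity_eq_integral_smul he.real_toNNReal g]
  congr 1
  funext x
  simp [NNReal.smul_def, Real.coe_toNNReal _ (hpos x)]

/-- Monotone-truncation convergence of integrals. -/
lemma tendsto_cutoff_integral {n k : ℕ}
    (ρ : Measure (EuclideanSpace ℝ (Fin n) × EuclideanSpace ℝ (Fin k)))
    [IsFiniteMeasure ρ] (g : EuclideanSpace ℝ (Fin n) → ℝ) (hg : Continuous g)
    (hsg : HasCompactSupport g) :
    Filter.Tendsto (fun m : ℕ => ∫ p, g p.1 * max 0 (min 1 ((m : ℝ) + 1 - ‖p.2‖)) ∂ρ)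
      Filter.atTop (nhds (∫ p, g p.1 ∂ρ)) := by
  obtain ⟨C, hC⟩ := hsg.exists_bound_of_continuous hg
  have hC0 : 0 ≤ C := (norm_nonneg _).trans (hC 0)
  apply tendsto_integral_of_dominated_convergence (fun _ => C)
  · intro m
    exact ((hg.comp continuous_fst).mul
      (continuous_const.max (continuous_const.min
        (continuous_const.sub continuous_snd.norm)))).aestronglyMeasurable
  · exact integrable_const C
  · intro m
    filter_upwards with p
    have h1 : |max 0 (min 1 ((m : ℝ) + 1 - ‖p.2‖))| ≤ 1 := by
      rw [abs_le]
      constructor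
      · linarith [le_max_left (0 : ℝ) (min 1 ((m : ℝ) + 1 - ‖p.2‖))]
      · exact max_le zero_le_one (min_le_left _ _)
    calc ‖g p.1 * max 0 (min 1 ((m : ℝ) + 1 - ‖p.2‖))‖
        = ‖g p.1‖ * |max 0 (min 1 ((m : ℝ) + 1 - ‖p.2‖))| := by rw [norm_mul]; rfl
      _ ≤ C * 1 := mul_le_mul (hC p.1) h1 (abs_nonneg _) hC0
      _ = C := mul_one C
  · filter_upwards with p
    have h2 : Filter.Tendsto (fun m : ℕ => max 0 (min 1 ((m : ℝ) + 1 - ‖p.2‖)))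
        Filter.atTop (nhds 1) := by
      apply tendsto_atTop_of_eventually_const (i₀ := ⌈‖p.2‖⌉₊)
      intro m hm
      have hle : ‖p.2‖ ≤ (m : ℝ) := (Nat.le_ceil _).trans (by exact_mod_cast hm)
      rw [min_eq_left (by linarith), max_eq_right zero_le_one]
    simpa using h2.const_mul (g p.1)

set_option maxHeartbeats 2000000 in
/-- If `ρ` is an `α`-super log-concave finite measure on
`ℝ^n × ℝ^k` (with respect to the Euclidean norm `|(y,z)|² = |y|² + |z|²`), then its
pushforward under the projection `(y, z) ↦ y` is `α`-super log-concave on `ℝ^n`. -/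
theorem superLogConcave_fst_projection {n k : ℕ} (α : ℝ) (hα : 0 ≤ α)
    (ρ : Measure (EuclideanSpace ℝ (Fin n) × EuclideanSpace ℝ (Fin k)))
    [IsFiniteMeasure ρ]
    (hρ : PrekopaLeindler
      (ρ.withDensity fun p => ENNReal.ofReal (Real.exp (α / 2 * (‖p.1‖ ^ 2 + ‖p.2‖ ^ 2))))) :
    SuperLogConcave α (ρ.map Prod.fst) := by
  intro s t hs ht hst a b c hca hcb hcc hsa hsb hsc ha0 hb0 hc0 hbc
  -- rewrite the goal integrals over the projection
  have hmap : ∀ f : EuclideanSpace ℝ (Fin n) → ℝ, Continuous f →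
      (∫ x, f x
        ∂((ρ.map Prod.fst).withDensity fun x => ENNReal.ofReal (Real.exp (α / 2 * ‖x‖ ^ 2))))
      = ∫ p, Real.exp (α / 2 * ‖p.1‖ ^ 2) * f p.1 ∂ρ := by
    intro f hf
    have hcE : Continuous fun x : EuclideanSpace ℝ (Fin n) => Real.exp (α / 2 * ‖x‖ ^ 2) :=
      Real.continuous_exp.comp (continuous_const.mul (continuous_norm.pow 2))
    have hmE : Measurable fun x : EuclideanSpace ℝ (Fin n) => Real.exp (α / 2 * ‖x‖ ^ 2) :=
      hcE.measurable
    rw [integral_withDensity_ofReal _ _ hmE (fun x => (Real.exp_pos _).le)]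
    exact integral_map measurable_fst.aemeasurable (hcE.mul hf).aestronglyMeasurable
  rw [hmap a hca, hmap b hcb, hmap c hcc]
  -- the truncated inequality, for each m
  have key : ∀ m : ℕ,
      (∫ p, (Real.exp (α / 2 * ‖p.1‖ ^ 2) * b p.1) * max 0 (min 1 ((m : ℝ) + 1 - ‖p.2‖)) ∂ρ) ^ s *
      (∫ p, (Real.exp (α / 2 * ‖p.1‖ ^ 2) * c p.1) * max 0 (min 1 ((m : ℝ) + 1 - ‖p.2‖)) ∂ρ) ^ t ≤
      ∫ p, (Real.exp (α / 2 * ‖p.1‖ ^ 2) * a p.1) * max 0 (min 1 ((m : ℝ) + 1 - ‖p.2‖)) ∂ρ := by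
    intro m
    set φ : EuclideanSpace ℝ (Fin k) → ℝ :=
      fun z => Real.exp (-(α / 2) * ‖z‖ ^ 2) * max 0 (min 1 ((m : ℝ) + 1 - ‖z‖)) with hφ
    have hφc : Continuous φ := by
      apply Continuous.mul
      · exact Real.continuous_exp.comp (continuous_const.mul (continuous_norm.pow 2))
      · exact continuous_const.max (continuous_const.min (continuous_const.sub continuous_norm))
    have hφ0 : ∀ z, 0 ≤ φ z := fun z => mul_nonneg (Real.exp_pos _).le (le_max_left _ _)
    have hφs : HasCompactSupport φ := by
      apply HasCompactSupport.intro (isCompact_closedBall (0 : EuclideanSpace ℝ (Fin k))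
        ((m : ℝ) + 2))
      intro z hz
      rw [Metric.mem_closedBall, dist_zero_right, not_le] at hz
      have : min 1 ((m : ℝ) + 1 - ‖z‖) ≤ 0 := (min_le_right _ _).trans (by linarith)
      rw [hφ]
      dsimp only
      rw [max_eq_left this, mul_zero]
    -- the three test functions on the product space
    have prodCont : ∀ f : EuclideanSpace ℝ (Fin n) → ℝ, Continuous f →
        Continuous (fun p : EuclideanSpace ℝ (Fin n) × EuclideanSpace ℝ (Fin k) =>
          f p.1 * φ p.2) :=
      fun f hf => (hf.comp continuous_fst).mul (hφc.comp continuous_snd)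
    have prodSupp : ∀ f : EuclideanSpace ℝ (Fin n) → ℝ, HasCompactSupport f →
        HasCompactSupport (fun p : EuclideanSpace ℝ (Fin n) × EuclideanSpace ℝ (Fin k) =>
          f p.1 * φ p.2) := by
      intro f hf
      apply HasCompactSupport.intro (hf.prod hφs)
      intro p hp
      by_cases h1 : p.1 ∈ tsupport f
      · have h2 : p.2 ∉ tsupport φ := fun h2 => hp (Set.mem_prod.2 ⟨h1, h2⟩)
        rw [image_eq_zero_of_notMem_tsupport h2, mul_zero]
      · rw [image_eq_zero_of_notMem_tsupport h1, zero_mul]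
    have H := hρ s t hs ht hst
      (fun p => a p.1 * φ p.2) (fun p => b p.1 * φ p.2) (fun p => c p.1 * φ p.2)
      (prodCont a hca) (prodCont b hcb) (prodCont c hcc)
      (prodSupp a hsa) (prodSupp b hsb) (prodSupp c hsc)
      (fun p => mul_nonneg (ha0 _) (hφ0 _)) (fun p => mul_nonneg (hb0 _) (hφ0 _))
      (fun p => mul_nonneg (hc0 _) (hφ0 _))
      (by
        intro p q
        show (b p.1 * φ p.2) ^ s * (c q.1 * φ q.2) ^ t
          ≤ a (s • p + t • q).1 * φ (s • p + t • q).2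
        have e1 : (s • p + t • q).1 = s • p.1 + t • q.1 := rfl
        have e2 : (s • p + t • q).2 = s • p.2 + t • q.2 := rfl
        rw [e1, e2, Real.mul_rpow (hb0 _) (hφ0 _), Real.mul_rpow (hc0 _) (hφ0 _),
          mul_mul_mul_comm]
        exact mul_le_mul (hbc _ _) (phi_logConcave hα ((m : ℝ) + 1) hs ht hst p.2 q.2)
          (mul_nonneg (Real.rpow_nonneg (hφ0 _) _) (Real.rpow_nonneg (hφ0 _) _)) (ha0 _))
    have hwd : ∀ G : EuclideanSpace ℝ (Fin n) × EuclideanSpace ℝ (Fin k) → ℝ,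
        (∫ p, G p ∂(ρ.withDensity fun p =>
          ENNReal.ofReal (Real.exp (α / 2 * (‖p.1‖ ^ 2 + ‖p.2‖ ^ 2)))))
        = ∫ p, Real.exp (α / 2 * (‖p.1‖ ^ 2 + ‖p.2‖ ^ 2)) * G p ∂ρ := by
      intro G
      have hm : Measurable fun p : EuclideanSpace ℝ (Fin n) × EuclideanSpace ℝ (Fin k) =>
          Real.exp (α / 2 * (‖p.1‖ ^ 2 + ‖p.2‖ ^ 2)) :=
        (Real.continuous_exp.comp (continuous_const.mul
          ((continuous_fst.norm.pow 2).add (continuous_snd.norm.pow 2)))).measurable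
      exact integral_withDensity_ofReal _ _ hm (fun x => (Real.exp_pos _).le) G
    rw [hwd, hwd, hwd] at H
    have hexp : ∀ x y : ℝ, Real.exp (α / 2 * (x + y)) * Real.exp (-(α / 2) * y)
        = Real.exp (α / 2 * x) := by
      intro x y
      rw [← Real.exp_add]
      congr 1
      ring
    have hpt : ∀ (f : EuclideanSpace ℝ (Fin n) → ℝ)
        (p : EuclideanSpace ℝ (Fin n) × EuclideanSpace ℝ (Fin k)),
        Real.exp (α / 2 * (‖p.1‖ ^ 2 + ‖p.2‖ ^ 2)) * (f p.1 * φ p.2)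
        = (Real.exp (α / 2 * ‖p.1‖ ^ 2) * f p.1) * max 0 (min 1 ((m : ℝ) + 1 - ‖p.2‖)) := by
      intro f p
      rw [hφ]
      dsimp only
      calc Real.exp (α / 2 * (‖p.1‖ ^ 2 + ‖p.2‖ ^ 2)) *
            (f p.1 * (Real.exp (-(α / 2) * ‖p.2‖ ^ 2) * max 0 (min 1 ((m : ℝ) + 1 - ‖p.2‖))))
          = (Real.exp (α / 2 * (‖p.1‖ ^ 2 + ‖p.2‖ ^ 2)) * Real.exp (-(α / 2) * ‖p.2‖ ^ 2)) *
            f p.1 * max 0 (min 1 ((m : ℝ) + 1 - ‖p.2‖)) := by ring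
        _ = (Real.exp (α / 2 * ‖p.1‖ ^ 2) * f p.1) * max 0 (min 1 ((m : ℝ) + 1 - ‖p.2‖)) := by
            rw [hexp]
    simp only [hpt] at H
    exact H
  -- pass to the limit
  have la := tendsto_cutoff_integral ρ (fun x => Real.exp (α / 2 * ‖x‖ ^ 2) * a x)
    (by exact (Real.continuous_exp.comp (continuous_const.mul (continuous_norm.pow 2))).mul hca) hsa.mul_left
  have lb := tendsto_cutoff_integral ρ (fun x => Real.exp (α / 2 * ‖x‖ ^ 2) * b x)
    (by exact (Real.continuous_exp.comp (continuous_const.mul (continuous_norm.pow 2))).mul hcb) hsb.mul_left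
  have lc := tendsto_cutoff_integral ρ (fun x => Real.exp (α / 2 * ‖x‖ ^ 2) * c x)
    (by exact (Real.continuous_exp.comp (continuous_const.mul (continuous_norm.pow 2))).mul hcc) hsc.mul_left
  exact le_of_tendsto_of_tendsto'
    ((lb.rpow_const (Or.inr hs)).mul (lc.rpow_const (Or.inr ht))) la key
end
end

section
/- Let f, f₀, f₁ be nonnegative, bounded, Borel measurable functions on ℝ^n and let α, β ∈ [0,1] with α + β = 1. Suppose that for all compact sets C₀, C₁ ⊆ ℝ^n one has ∫_{αC₀+βC₁} f(x) dx ≥ (∫_{C₀} f₀(x) dx)^α · (∫_{C₁} f₁(x) dx)^β, where αC₀ + βC₁ = { α·c₀ + β·c₁ : c₀ ∈ C₀, c₁ ∈ C₁ } and the integrals are with respect to Lebesgue measure. Then for every x₀, x₁ ∈ ℝ^n, one has f(z + α·x₀ + β·x₁) ≥ f₀(z + x₀)^α · f₁(z + x₁)^β for Lebesgue-almost every z ∈ ℝ^n. -/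
open MeasureTheory Pointwise ENNReal

noncomputable section

/-- (A version of Borell's lemma.) If nonnegative bounded Borel
functions `f, f₀, f₁` on `ℝ^n` satisfy the set-wise Prékopa–Leindler inequality for
all compact sets, then they satisfy the pointwise inequality almost everywhere. -/
theorem pointwise_of_setwise_prekopaLeindler {n : ℕ}
    (f f₀ f₁ : EuclideanSpace ℝ (Fin n) → ℝ)
    (hf : Measurable f) (hf₀ : Measurable f₀) (hf₁ : Measurable f₁)
    (hf0 : ∀ x, 0 ≤ f x) (hf₀0 : ∀ x, 0 ≤ f₀ x) (hf₁0 : ∀ x, 0 ≤ f₁ x)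
    (hfb : ∃ C, ∀ x, f x ≤ C) (hf₀b : ∃ C, ∀ x, f₀ x ≤ C) (hf₁b : ∃ C, ∀ x, f₁ x ≤ C)
    (α β : ℝ) (hα : 0 ≤ α) (hβ : 0 ≤ β) (hαβ : α + β = 1)
    (hyp : ∀ C₀ C₁ : Set (EuclideanSpace ℝ (Fin n)), IsCompact C₀ → IsCompact C₁ →
      (∫ x in C₀, f₀ x) ^ α * (∫ x in C₁, f₁ x) ^ β ≤ ∫ x in α • C₀ + β • C₁, f x) :
    ∀ x₀ x₁ : EuclideanSpace ℝ (Fin n),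
      ∀ᵐ z ∂(volume : Measure (EuclideanSpace ℝ (Fin n))),
        f₀ (z + x₀) ^ α * f₁ (z + x₁) ^ β ≤ f (z + α • x₀ + β • x₁) := by
  intro x₀ x₁
  let E := EuclideanSpace ℝ (Fin n)
  let μ : Measure (EuclideanSpace ℝ (Fin n)) := volume
  -- local integrability of bounded nonneg measurable functions
  have locInt : ∀ (g : E → ℝ), Measurable g → (∀ x, 0 ≤ g x) → (∃ C, ∀ x, g x ≤ C) →
      LocallyIntegrable g μ := by
    rintro g hg hg0 ⟨C, hC⟩
    intro x
    refine ⟨Metric.closedBall x 1, Metric.closedBall_mem_nhds x one_pos, ?_⟩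
    apply Measure.integrableOn_of_bounded (M := C) (measure_closedBall_lt_top).ne
      hg.aestronglyMeasurable
    filter_upwards with y
    rw [Real.norm_of_nonneg (hg0 y)]
    exact hC y
  -- Lebesgue differentiation
  have leb : ∀ (g : E → ℝ), LocallyIntegrable g μ →
      ∀ᵐ w ∂μ, Filter.Tendsto (fun r : ℝ => ⨍ y in Metric.closedBall w r, g y ∂μ)
        (nhdsWithin 0 (Set.Ioi 0)) (nhds (g w)) := by
    intro g hg
    filter_upwards [(Besicovitch.vitaliFamily μ).ae_tendsto_average hg] with w hw
    exact hw.comp (Besicovitch.tendsto_filterAt μ w)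
  -- translating an a.e. statement
  have key : ∀ (v : E) (P : E → Prop), (∀ᵐ w ∂μ, P w) → ∀ᵐ z ∂μ, P (z + v) := by
    intro v P h
    exact (measurePreserving_add_right μ v).quasiMeasurePreserving.ae h
  filter_upwards [key x₀ _ (leb f₀ (locInt f₀ hf₀ hf₀0 hf₀b)),
    key x₁ _ (leb f₁ (locInt f₁ hf₁ hf₁0 hf₁b)),
    key (α • x₀ + β • x₁) _ (leb f (locInt f hf hf0 hfb))] with z h₀ h₁ hz
  rw [add_assoc]
  -- the comparison of averages at scale r > 0
  have ineq : ∀ᶠ r in nhdsWithin (0:ℝ) (Set.Ioi 0),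
      (⨍ y in Metric.closedBall (z + x₀) r, f₀ y ∂μ) ^ α *
      (⨍ y in Metric.closedBall (z + x₁) r, f₁ y ∂μ) ^ β ≤
      ⨍ y in Metric.closedBall (z + (α • x₀ + β • x₁)) r, f y ∂μ := by
    filter_upwards [self_mem_nhdsWithin] with r (hr : 0 < r)
    have hball : α • Metric.closedBall (z + x₀) r + β • Metric.closedBall (z + x₁) r =
        Metric.closedBall (z + (α • x₀ + β • x₁)) r := by
      rw [smul_closedBall _ _ hr.le, smul_closedBall _ _ hr.le,
        closedBall_add_closedBall (by positivity) (by positivity),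
        Real.norm_of_nonneg hα, Real.norm_of_nonneg hβ,
        show α * r + β * r = r by rw [← add_mul, hαβ, one_mul]]
      rw [smul_add, smul_add, add_add_add_comm, ← add_smul, hαβ, one_smul]
    have hcomp := hyp (Metric.closedBall (z + x₀) r) (Metric.closedBall (z + x₁) r)
      (isCompact_closedBall _ _) (isCompact_closedBall _ _)
    rw [hball] at hcomp
    have hVc : ∀ c : E, μ (Metric.closedBall c r) = μ (Metric.closedBall (0:E) r) := fun c =>
      Measure.addHaar_closedBall_center μ c r
    set V : ℝ := (μ (Metric.closedBall (0:E) r)).toReal with hV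
    have hVpos : 0 < V := ENNReal.toReal_pos (Metric.measure_closedBall_pos μ _ hr).ne'
      measure_closedBall_lt_top.ne
    have havg : ∀ (g : E → ℝ) (c : E), ⨍ y in Metric.closedBall c r, g y ∂μ =
        V⁻¹ * ∫ y in Metric.closedBall c r, g y ∂μ := by
      intro g c
      rw [setAverage_eq, measureReal_def, hVc c, smul_eq_mul]
    rw [havg, havg, havg]
    have hI₀ : 0 ≤ ∫ y in Metric.closedBall (z + x₀) r, f₀ y ∂μ :=
      setIntegral_nonneg measurableSet_closedBall fun y _ => hf₀0 y
    have hI₁ : 0 ≤ ∫ y in Metric.closedBall (z + x₁) r, f₁ y ∂μ :=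
      setIntegral_nonneg measurableSet_closedBall fun y _ => hf₁0 y
    rw [Real.mul_rpow (by positivity) hI₀, Real.mul_rpow (by positivity) hI₁]
    calc V⁻¹ ^ α * (∫ y in Metric.closedBall (z + x₀) r, f₀ y ∂μ) ^ α *
          (V⁻¹ ^ β * (∫ y in Metric.closedBall (z + x₁) r, f₁ y ∂μ) ^ β)
        = V⁻¹ * ((∫ y in Metric.closedBall (z + x₀) r, f₀ y ∂μ) ^ α *
            (∫ y in Metric.closedBall (z + x₁) r, f₁ y ∂μ) ^ β) := by
          rw [show V⁻¹ ^ α * (∫ y in Metric.closedBall (z + x₀) r, f₀ y ∂μ) ^ α *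
              (V⁻¹ ^ β * (∫ y in Metric.closedBall (z + x₁) r, f₁ y ∂μ) ^ β) =
              V⁻¹ ^ α * V⁻¹ ^ β * ((∫ y in Metric.closedBall (z + x₀) r, f₀ y ∂μ) ^ α *
              (∫ y in Metric.closedBall (z + x₁) r, f₁ y ∂μ) ^ β) by ring,
            ← Real.rpow_add (by positivity), hαβ, Real.rpow_one]
      _ ≤ V⁻¹ * ∫ y in Metric.closedBall (z + (α • x₀ + β • x₁)) r, f y ∂μ :=
          mul_le_mul_of_nonneg_left hcomp (by positivity)
  -- pass to the limit
  have t₀ : Filter.Tendsto (fun r : ℝ => (⨍ y in Metric.closedBall (z + x₀) r, f₀ y ∂μ) ^ α)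
      (nhdsWithin 0 (Set.Ioi 0)) (nhds (f₀ (z + x₀) ^ α)) :=
    ((Real.continuousAt_rpow_const _ _ (Or.inr hα)).tendsto.comp h₀ :)
  have t₁ : Filter.Tendsto (fun r : ℝ => (⨍ y in Metric.closedBall (z + x₁) r, f₁ y ∂μ) ^ β)
      (nhdsWithin 0 (Set.Ioi 0)) (nhds (f₁ (z + x₁) ^ β)) :=
    ((Real.continuousAt_rpow_const _ _ (Or.inr hβ)).tendsto.comp h₁ :)
  exact le_of_tendsto_of_tendsto (t₀.mul t₁) hz ineq
end
end
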